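/- Let p be such that 0 < D(1/2∥p) < 1 and set the group size N_l = log N. Then the probability that in all L = N/log N groups at most half the users drop out tends to 0 as N → ∞. -/

import Mathlib

/-- KL divergence between Bernoulli(a) and Bernoulli(b). -/
noncomputable def klBern (a b : ℝ) : ℝ :=
  a * Real.log (a / b) + (1 - a) * Real.log ((1 - a) / (1 - b))

/-- Upper-tail probability `P[X ≥ k]` of a Binomial(n, p) random variable. -/
noncomputable def binomTail (n k : ℕ) (p : ℝ) : ℝ :=
  ∑ j ∈ Finset.Icc k n, (n.choose j : ℝ) * p ^ j * (1 - p) ^ (n - j)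

-- L1 : tail ≤ 1
lemma binomTail_le_one {p : ℝ} (hp0 : 0 ≤ p) (hp1 : p ≤ 1) (n k : ℕ) :
    binomTail n k p ≤ 1 := by
  have h1 : ∑ j ∈ Finset.range (n+1), (n.choose j : ℝ) * p ^ j * (1 - p) ^ (n - j) = 1 := by
    have h := add_pow p (1 - p) n
    simp only [add_sub_cancel, one_pow] at h
    calc ∑ j ∈ Finset.range (n+1), (n.choose j : ℝ) * p ^ j * (1 - p) ^ (n - j)
        = ∑ j ∈ Finset.range (n+1), p ^ j * (1 - p) ^ (n - j) * (n.choose j : ℝ) :=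
          Finset.sum_congr rfl (fun j _ => by ring)
      _ = 1 := h.symm
  rw [← h1, binomTail]
  apply Finset.sum_le_sum_of_subset_of_nonneg
  · intro j hj
    simp only [Finset.mem_Icc, Finset.mem_range] at *
    omega
  · intro j _ _
    have : 0 ≤ 1 - p := by linarith
    positivity

-- L2 : single-term lower bound
lemma le_binomTail {p : ℝ} (hp0 : 0 ≤ p) (hp1 : p ≤ 1) {n k : ℕ} (hk : k ≤ n) :
    (n.choose k : ℝ) * p ^ k * (1 - p) ^ (n - k) ≤ binomTail n k p := by
  apply Finset.single_le_sum (f := fun j => (n.choose j : ℝ) * p ^ j * (1 - p) ^ (n - j))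
  · intro j _
    have : 0 ≤ 1 - p := by linarith
    positivity
  · simp [Finset.mem_Icc, hk]

-- L3 : choose lower bound
lemma choose_half_succ_lower (n : ℕ) (hn : 1 ≤ n) :
    2 ^ n ≤ 2 * (n + 1) * n.choose (n / 2 + 1) := by
  have h0 : 2 ^ n ≤ (n + 1) * n.choose (n / 2) := by
    calc 2 ^ n = ∑ j ∈ Finset.range (n+1), n.choose j := (Nat.sum_range_choose n).symm
    _ ≤ ∑ j ∈ Finset.range (n+1), n.choose (n / 2) :=
        Finset.sum_le_sum fun j _ => Nat.choose_le_middle j n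
    _ = (n + 1) * n.choose (n / 2) := by simp [Finset.sum_const, mul_comm]
  have h1 : n.choose (n / 2 + 1) * (n / 2 + 1) = n.choose (n / 2) * (n - n / 2) :=
    Nat.choose_succ_right_eq n (n / 2)
  have h2 : n.choose (n / 2) ≤ 2 * n.choose (n / 2 + 1) := by
    have h3 : n.choose (n / 2) * (n / 2 + 1) ≤ 2 * n.choose (n / 2 + 1) * (n / 2 + 1) := by
      calc n.choose (n / 2) * (n / 2 + 1) ≤ n.choose (n / 2) * (2 * (n - n / 2)) := by
            apply Nat.mul_le_mul_left; omega
      _ = 2 * (n.choose (n / 2 + 1) * (n / 2 + 1)) := by rw [h1]; ring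
      _ = 2 * n.choose (n / 2 + 1) * (n / 2 + 1) := by ring
    exact Nat.le_of_mul_le_mul_right h3 (by omega)
  calc 2 ^ n ≤ (n + 1) * n.choose (n / 2) := h0
  _ ≤ (n + 1) * (2 * n.choose (n / 2 + 1)) := Nat.mul_le_mul_left _ h2
  _ = 2 * (n + 1) * n.choose (n / 2 + 1) := by ring

-- L4 : exponent identity
lemma exp_neg_kl {p : ℝ} (hp0 : 0 < p) (hp : p < 1/2) (n : ℕ) :
    Real.exp (-(klBern (1/2) p) * n) = 2^n * (1-p)^n * (p/(1-p)) ^ ((n:ℝ)/2) := by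
  have h1p : 0 < 1 - p := by linarith
  have ht : 0 < p / (1-p) := div_pos hp0 h1p
  have e1 : (2:ℝ)^n = Real.exp ((n:ℝ) * Real.log 2) := by
    rw [Real.exp_nat_mul, Real.exp_log two_pos]
  have e2 : (1-p)^n = Real.exp ((n:ℝ) * Real.log (1-p)) := by
    rw [Real.exp_nat_mul, Real.exp_log h1p]
  have e3 : (p/(1-p)) ^ ((n:ℝ)/2) = Real.exp (Real.log (p/(1-p)) * ((n:ℝ)/2)) :=
    Real.rpow_def_of_pos ht _
  rw [e1, e2, e3, ← Real.exp_add, ← Real.exp_add]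
  congr 1
  have l1 : Real.log ((1/2) / p) = -Real.log 2 - Real.log p := by
    rw [Real.log_div (by norm_num) hp0.ne', one_div, Real.log_inv]
  have l2 : Real.log ((1/2) / (1-p)) = -Real.log 2 - Real.log (1-p) := by
    rw [Real.log_div (by norm_num) h1p.ne', one_div, Real.log_inv]
  have l3 : Real.log (p/(1-p)) = Real.log p - Real.log (1-p) :=
    Real.log_div hp0.ne' h1p.ne'
  have hhalf : (1:ℝ) - 1/2 = 1/2 := by norm_num
  rw [klBern, hhalf, l1, l2, l3]
  ring

-- L5 : key lower bound on tail
lemma tail_lower {p : ℝ} (hp0 : 0 < p) (hp : p < 1/2) {n : ℕ} (hn : 2 ≤ n) :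
    (p/(1-p)) / (2*((n:ℝ)+1)) * Real.exp (-(klBern (1/2) p) * n)
      ≤ binomTail n (n/2+1) p := by
  have h1p : 0 < 1 - p := by linarith
  have ht : 0 < p / (1-p) := div_pos hp0 h1p
  have ht1 : p / (1-p) ≤ 1 := by
    rw [div_le_one h1p]; linarith
  set k := n/2+1 with hkdef
  have hk : k ≤ n := by omega
  have hkle : (k:ℝ) ≤ (n:ℝ)/2 + 1 := by
    have := Nat.cast_div_le (α := ℝ) (m := n) (n := 2)
    push_cast [hkdef]
    push_cast at this
    linarith
  have step2 : (2:ℝ)^n / (2*((n:ℝ)+1)) ≤ (n.choose k : ℝ) := by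
    rw [div_le_iff₀ (by positivity)]
    have := choose_half_succ_lower n (by omega)
    have hcast : ((2:ℝ)^n) ≤ 2 * ((n:ℝ) + 1) * (n.choose (n / 2 + 1) : ℝ) := by
      exact_mod_cast this
    linarith
  have step3 : p^k * (1-p)^(n-k) = (1-p)^n * (p/(1-p))^k := by
    rw [div_pow, pow_sub₀ _ h1p.ne' hk]
    ring
  have step4 : (p/(1-p)) ^ ((n:ℝ)/2) * (p/(1-p)) ≤ (p/(1-p))^k := by
    calc (p/(1-p)) ^ ((n:ℝ)/2) * (p/(1-p))
        = (p/(1-p)) ^ ((n:ℝ)/2 + 1) := by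
          rw [Real.rpow_add ht, Real.rpow_one]
      _ ≤ (p/(1-p)) ^ ((k:ℝ)) := Real.rpow_le_rpow_of_exponent_ge ht ht1 hkle
      _ = (p/(1-p)) ^ k := Real.rpow_natCast _ k
  calc (p/(1-p)) / (2*((n:ℝ)+1)) * Real.exp (-(klBern (1/2) p) * n)
      = (2:ℝ)^n / (2*((n:ℝ)+1)) * ((1-p)^n * ((p/(1-p)) ^ ((n:ℝ)/2) * (p/(1-p)))) := by
        rw [exp_neg_kl hp0 hp]; ring
    _ ≤ (2:ℝ)^n / (2*((n:ℝ)+1)) * ((1-p)^n * (p/(1-p))^k) := by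
        apply mul_le_mul_of_nonneg_left _ (by positivity)
        exact mul_le_mul_of_nonneg_left step4 (by positivity)
    _ = (2:ℝ)^n / (2*((n:ℝ)+1)) * (p^k * (1-p)^(n-k)) := by rw [step3]
    _ ≤ (n.choose k : ℝ) * (p^k * (1-p)^(n-k)) := by
        apply mul_le_mul_of_nonneg_right step2
        positivity
    _ = (n.choose k : ℝ) * p^k * (1-p)^(n-k) := by ring
    _ ≤ binomTail n k p := le_binomTail hp0.le (by linarith) hk

-- helper: log N + 2 ≤ N^b eventually
lemma eventually_log_add_two_le {b : ℝ} (hb : 0 < b) :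
    ∀ᶠ N : ℕ in Filter.atTop, Real.log N + 2 ≤ (N:ℝ) ^ b := by
  have h2 : 0 < b / 2 := by linarith
  have htend : Filter.Tendsto (fun N : ℕ => (N:ℝ) ^ (b/2)) Filter.atTop Filter.atTop :=
    (tendsto_rpow_atTop h2).comp tendsto_natCast_atTop_atTop
  filter_upwards [htend.eventually_ge_atTop (2/b + 2), Filter.eventually_ge_atTop 1]
    with N hy hN1
  have hN0 : (0:ℝ) < N := by exact_mod_cast hN1
  set y := (N:ℝ) ^ (b/2) with hydef
  have hy0 : 0 < y := Real.rpow_pos_of_pos hN0 _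
  have hb' : 0 < 2/b := by positivity
  have hlog : Real.log N = (2/b) * Real.log y := by
    rw [hydef, Real.log_rpow hN0]
    field_simp
  have hle : Real.log y ≤ y - 1 := Real.log_le_sub_one_of_pos hy0
  have hyy : y * y = (N:ℝ) ^ b := by
    rw [hydef, ← Real.rpow_add hN0]
    norm_num
  rw [hlog, ← hyy]
  nlinarith [mul_le_mul_of_nonneg_left hle hb'.le,
    mul_nonneg (sub_nonneg.mpr hy) hy0.le]

lemma Lq_tendsto (p : ℝ) (hp0 : 0 < p) (hp : p < 1 / 2)
    (hc0 : 0 < klBern (1 / 2) p) (hc1 : klBern (1 / 2) p < 1) :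
    Filter.Tendsto (fun N : ℕ =>
      ((N / ⌈Real.log N⌉₊ : ℕ) : ℝ) * binomTail (⌈Real.log N⌉₊) (⌈Real.log N⌉₊ / 2 + 1) p)
      Filter.atTop Filter.atTop := by
  set c := klBern (1 / 2) p with hcdef
  have h1p : 0 < 1 - p := by linarith
  set t := p / (1 - p) with htdef
  have ht : 0 < t := div_pos hp0 h1p
  set b : ℝ := (1 - c) / 4 with hbdef
  have hb : 0 < b := by rw [hbdef]; linarith
  set K := t * Real.exp (-c) / 4 with hKdef
  have hK : 0 < K := by positivity
  have hlow : Filter.Tendsto (fun N : ℕ => K * (N:ℝ) ^ ((1 - c)/2))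
      Filter.atTop Filter.atTop := by
    apply Filter.Tendsto.const_mul_atTop hK
    exact (tendsto_rpow_atTop (by linarith)).comp tendsto_natCast_atTop_atTop
  apply Filter.tendsto_atTop_mono' _ _ hlow
  -- eventual facts
  have htend1b : Filter.Tendsto (fun N : ℕ => (N:ℝ) ^ (1 - b)) Filter.atTop Filter.atTop :=
    (tendsto_rpow_atTop (by rw [hbdef]; linarith)).comp tendsto_natCast_atTop_atTop
  have htlog : Filter.Tendsto (fun N : ℕ => Real.log N) Filter.atTop Filter.atTop :=
    Real.tendsto_log_atTop.comp tendsto_natCast_atTop_atTop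
  filter_upwards [eventually_log_add_two_le hb, htend1b.eventually_ge_atTop 2,
    htlog.eventually_ge_atTop 2, Filter.eventually_ge_atTop 1] with N hF1 hF2 hlog2 hN1
  set x := Real.log N with hxdef
  set n := ⌈x⌉₊ with hndef
  set L := N / n with hLdef
  set q := binomTail n (n / 2 + 1) p with hqdef
  have hN0 : (0:ℝ) < N := by exact_mod_cast hN1
  have hx0 : 0 ≤ x := le_trans (by norm_num) hlog2
  have hn2 : 2 ≤ n := by
    have h : (1:ℕ) < ⌈x⌉₊ := Nat.lt_ceil.mpr (by push_cast; linarith)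
    omega
  have hn_posR : (0:ℝ) < n := by positivity
  have hn_le : (n:ℝ) ≤ x + 1 := (Nat.ceil_lt_add_one hx0).le
  have hNb_pos : (0:ℝ) < (N:ℝ) ^ b := Real.rpow_pos_of_pos hN0 b
  have hnb : (n:ℝ) + 1 ≤ (N:ℝ) ^ b := by
    calc (n:ℝ) + 1 ≤ x + 2 := by linarith
    _ ≤ (N:ℝ) ^ b := hF1
  -- lower bound on q
  have hq1 : t / (2 * ((n:ℝ) + 1)) * Real.exp (-c * n) ≤ q := tail_lower hp0 hp hn2
  have hexp : Real.exp (-c) * (N:ℝ) ^ (-c) ≤ Real.exp (-c * n) := by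
    have h1 : Real.exp (-c) * (N:ℝ) ^ (-c) = Real.exp (-c * (x + 1)) := by
      rw [Real.rpow_def_of_pos hN0, ← Real.exp_add, ← hxdef]
      ring_nf
    rw [h1]
    apply Real.exp_le_exp.mpr
    nlinarith
  have hq2 : t * Real.exp (-c) / 2 * ((N:ℝ) ^ (-c) / (N:ℝ) ^ b) ≤ q := by
    have e1 : t * Real.exp (-c) / 2 * ((N:ℝ) ^ (-c) / ((n:ℝ) + 1))
        = t / (2 * ((n:ℝ) + 1)) * (Real.exp (-c) * (N:ℝ) ^ (-c)) := by
      field_simp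
    have h1 : t * Real.exp (-c) / 2 * ((N:ℝ) ^ (-c) / (N:ℝ) ^ b)
        ≤ t * Real.exp (-c) / 2 * ((N:ℝ) ^ (-c) / ((n:ℝ) + 1)) := by
      gcongr
    have h2 : t / (2 * ((n:ℝ) + 1)) * (Real.exp (-c) * (N:ℝ) ^ (-c))
        ≤ t / (2 * ((n:ℝ) + 1)) * Real.exp (-c * n) := by
      gcongr
    linarith
  -- lower bound on L
  have hLlow : (N:ℝ) ^ ((1:ℝ) - b) / 2 ≤ (L:ℝ) := by
    have hnpos : 0 < n := by omega
    have hmod : N < n * L + n := by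
      have h := Nat.div_add_mod N n
      rw [← hLdef] at h
      have h2 := Nat.mod_lt N hnpos
      omega
    have hcast : (N:ℝ) < (n:ℝ) * (L:ℝ) + (n:ℝ) := by exact_mod_cast hmod
    have hdiv : (N:ℝ) / (n:ℝ) - 1 ≤ (L:ℝ) := by
      rw [div_sub_one hn_posR.ne', div_le_iff₀ hn_posR]
      nlinarith
    have hdiv2 : (N:ℝ) ^ ((1:ℝ) - b) ≤ (N:ℝ) / (n:ℝ) := by
      have e : (N:ℝ) ^ ((1:ℝ) - b) = (N:ℝ) / (N:ℝ) ^ b := by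
        rw [Real.rpow_sub hN0, Real.rpow_one]
      rw [e]
      gcongr
      linarith
    linarith
  -- combine
  have hqnn : 0 ≤ t * Real.exp (-c) / 2 * ((N:ℝ) ^ (-c) / (N:ℝ) ^ b) := by positivity
  calc K * (N:ℝ) ^ ((1 - c)/2)
      = (N:ℝ) ^ ((1:ℝ) - b) / 2 * (t * Real.exp (-c) / 2 * ((N:ℝ) ^ (-c) / (N:ℝ) ^ b)) := by
        rw [hKdef]
        have e1 : (N:ℝ) ^ (-c) / (N:ℝ) ^ b = (N:ℝ) ^ (-c - b) := by
          rw [← Real.rpow_sub hN0]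
        have e2 : (N:ℝ) ^ ((1:ℝ) - b) * (N:ℝ) ^ (-c - b) = (N:ℝ) ^ ((1 - c)/2) := by
          rw [← Real.rpow_add hN0]
          congr 1
          rw [hbdef]; ring
        rw [e1, ← e2]
        ring
    _ ≤ (L:ℝ) * q := mul_le_mul hLlow hq2 hqnn (by positivity)

lemma binomTail_nonneg {p : ℝ} (hp0 : 0 ≤ p) (hp1 : p ≤ 1) (n k : ℕ) :
    0 ≤ binomTail n k p := by
  apply Finset.sum_nonneg
  intro j _
  have : 0 ≤ 1 - p := by linarith
  positivity

theorem stmt6 (p : ℝ) (hp0 : 0 < p) (hp : p < 1 / 2)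
    (hc0 : 0 < klBern (1 / 2) p) (hc1 : klBern (1 / 2) p < 1) :
    Filter.Tendsto
      (fun N : ℕ =>
        (1 - binomTail (⌈Real.log N⌉₊) (⌈Real.log N⌉₊ / 2 + 1) p) ^ (N / ⌈Real.log N⌉₊))
      Filter.atTop (nhds 0) := by
  have hp1 : p ≤ 1 := by linarith
  apply squeeze_zero' (g := fun N : ℕ => Real.exp
    (-(((N / ⌈Real.log N⌉₊ : ℕ) : ℝ) * binomTail (⌈Real.log N⌉₊) (⌈Real.log N⌉₊ / 2 + 1) p)))
  · apply Filter.Eventually.of_forall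
    intro N
    have hq1 := binomTail_le_one hp0.le hp1 (⌈Real.log N⌉₊) (⌈Real.log N⌉₊ / 2 + 1)
    exact pow_nonneg (by linarith) _
  · apply Filter.Eventually.of_forall
    intro N
    have hq1 := binomTail_le_one hp0.le hp1 (⌈Real.log N⌉₊) (⌈Real.log N⌉₊ / 2 + 1)
    set q := binomTail (⌈Real.log N⌉₊) (⌈Real.log N⌉₊ / 2 + 1) p
    set L := N / ⌈Real.log N⌉₊
    calc (1 - q) ^ L ≤ (Real.exp (-q)) ^ L := by
          apply pow_le_pow_left₀ (by linarith)
          linarith [Real.add_one_le_exp (-q)]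
      _ = Real.exp (-((L:ℝ) * q)) := by
          rw [← Real.exp_nat_mul]
          congr 1
          ring
  · exact Real.tendsto_exp_atBot.comp
      (Filter.tendsto_neg_atTop_atBot.comp (Lq_tendsto p hp0 hp hc0 hc1))
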